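/- Let R be a commutative ring with invertible elements x, y, and let M₊ = !![1−x, −y; −x·y⁻¹, 0], M₋ = !![0, −x⁻¹·y; −y⁻¹, 1−x⁻¹]. Let n ≥ 2, let ε : Fin n → Bool, and let σ be a permutation of Fin n × Fin 2 such that for each a, the image σ(0,a) does not lie in {0} × Fin 2 (no edge runs from crossing 0 back to crossing 0). Let M(1₂) be the 2n×2n block-diagonal matrix whose block at index 0 is the identity 1₂ and whose block at i ≠ 0 is M₊ or M₋ according to ε(i), and let P be the permutation matrix of σ. Define a permutation σ₀ of ({i : Fin n // i ≠ 0}) × Fin 2 by σ₀(i,a) = σ(0,b) if σ(i,a) = (0,b) for some b, and σ₀(i,a) = σ(i,a) otherwise; let M₀ be the 2(n−1)×2(n−1) block-diagonal matrix with blocks given by ε on the crossings i ≠ 0, and P₀ the permutation matrix of σ₀. Then det(M(1₂) − P) = det(M₀ − P₀). -/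

import Mathlib

/-- The local crossing matrix assigned to a positive classical crossing in the
Jaeger–Kauffman–Saleur determinant model. -/
def Mpos {R : Type*} [CommRing R] (x y : Rˣ) : Matrix (Fin 2) (Fin 2) R :=
  !![1 - (x : R), -(y : R); -((x : R) * ((y⁻¹ : Rˣ) : R)), 0]

/-- The local crossing matrix assigned to a negative classical crossing. -/
def Mneg {R : Type*} [CommRing R] (x y : Rˣ) : Matrix (Fin 2) (Fin 2) R :=
  !![0, -(((x⁻¹ : Rˣ) : R) * (y : R)); -((y⁻¹ : Rˣ) : R), 1 - ((x⁻¹ : Rˣ) : R)]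

/-- The block-diagonal matrix indexed by `ι × Fin 2` whose diagonal `2×2` block at
index `i` is `blk i`. -/
def blockDiag {R : Type*} [CommRing R] {ι : Type*} [DecidableEq ι]
    (blk : ι → Matrix (Fin 2) (Fin 2) R) : Matrix (ι × Fin 2) (ι × Fin 2) R :=
  fun p q => if p.1 = q.1 then blk p.1 p.2 q.2 else 0

/-- The permutation matrix of `σ`: entry `1` at position `(p, σ p)` and `0` elsewhere. -/
def permMat (R : Type*) [CommRing R] {ι : Type*} [DecidableEq ι] (σ : Equiv.Perm ι) :
    Matrix ι ι R :=
  fun p q => if σ p = q then 1 else 0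

/-- Smoothing the crossing `0`: if no edge runs from crossing `0` back to itself, the
determinant with the identity block at crossing `0` equals the determinant of the
smoothed configuration on the remaining crossings. -/
theorem det_identityBlock_eq_det_smoothed {R : Type*} [CommRing R] (x y : Rˣ)
    (n : ℕ) (hn : 2 ≤ n) (ε : Fin n → Bool) (σ : Equiv.Perm (Fin n × Fin 2)) :
    let i0 : Fin n := ⟨0, by omega⟩
    ∀ (_ : ∀ a : Fin 2, (σ (i0, a)).1 ≠ i0)
      (σ₀ : Equiv.Perm ({i : Fin n // i ≠ i0} × Fin 2))
      (_ : ∀ (i : Fin n) (hi : i ≠ i0) (a : Fin 2),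
        ((σ₀ (⟨i, hi⟩, a)).1.1, (σ₀ (⟨i, hi⟩, a)).2) =
          if (σ (i, a)).1 = i0 then σ (i0, (σ (i, a)).2) else σ (i, a)),
    (blockDiag (fun i => if i = i0 then 1 else if ε i then Mpos x y else Mneg x y)
        - permMat R σ).det
      = (blockDiag (fun i : {i : Fin n // i ≠ i0} => if ε i.1 then Mpos x y else Mneg x y)
        - permMat R σ₀).det := by
  intro i0 hσ σ₀ hσ₀
  classical
  set A : Matrix (Fin n × Fin 2) (Fin n × Fin 2) R :=
    blockDiag (fun i => if i = i0 then 1 else if ε i then Mpos x y else Mneg x y)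
        - permMat R σ with hAdef
  -- the reindexing equivalence
  let e : (Fin 2 ⊕ ({i : Fin n // i ≠ i0} × Fin 2)) ≃ (Fin n × Fin 2) :=
    { toFun := Sum.elim (fun a => (i0, a)) (fun q => (q.1.1, q.2))
      invFun := fun p => if h : p.1 = i0 then Sum.inl p.2 else Sum.inr (⟨p.1, h⟩, p.2)
      left_inv := by
        rintro (a | q)
        · simp
        · simp [q.1.2]
      right_inv := by
        rintro ⟨i, b⟩
        by_cases h : i = i0 <;> simp [h] }
  set B : Matrix (Fin 2) ({i : Fin n // i ≠ i0} × Fin 2) R :=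
    fun a q => -(if σ (i0, a) = (q.1.1, q.2) then (1 : R) else 0) with hB
  set C : Matrix ({i : Fin n // i ≠ i0} × Fin 2) (Fin 2) R :=
    fun q a => -(if σ (q.1.1, q.2) = (i0, a) then (1 : R) else 0) with hC
  set D : Matrix ({i : Fin n // i ≠ i0} × Fin 2) ({i : Fin n // i ≠ i0} × Fin 2) R :=
    fun q q' => (if q.1 = q'.1 then (if ε q.1.1 then Mpos x y else Mneg x y) q.2 q'.2 else 0)
        - (if σ (q.1.1, q.2) = (q'.1.1, q'.2) then (1 : R) else 0) with hD
  have hsub : A.submatrix e e = Matrix.fromBlocks 1 B C D := by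
    ext p q
    rcases p with a | q1 <;> rcases q with b | q2
    · -- both in block 0
      have h1 : σ (i0, a) ≠ (i0, b) := by
        intro h; exact hσ a (by rw [h])
      simp [A, e, blockDiag, permMat, Matrix.one_apply, h1]
    · have h1 : (i0 : Fin n) ≠ q2.1.1 := fun h => q2.1.2 h.symm
      rw [Matrix.fromBlocks_apply₁₂]
      simp [A, e, blockDiag, permMat, B, h1]
    · have h1 : q1.1.1 ≠ i0 := q1.1.2
      rw [Matrix.fromBlocks_apply₂₁]
      simp [A, e, blockDiag, permMat, C, h1]
    · have h1 : q1.1.1 ≠ i0 := q1.1.2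
      have h2 : q1.1.1 = q2.1.1 ↔ q1.1 = q2.1 := Subtype.ext_iff.symm
      rw [Matrix.fromBlocks_apply₂₂]
      simp only [A, e, blockDiag, permMat, Matrix.sub_apply, Matrix.submatrix_apply,
        Equiv.coe_fn_mk, Sum.elim_inr, Matrix.fromBlocks_apply₂₂, D, h1, if_false, h2]
  have hdet : A.det = (Matrix.fromBlocks 1 B C D).det := by
    rw [← hsub, Matrix.det_submatrix_equiv_self]
  rw [hdet, Matrix.det_fromBlocks_one₁₁]
  congr 1
  ext q q'
  rcases q with ⟨⟨i, hi⟩, b⟩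
  rcases q' with ⟨⟨j, hj⟩, c⟩
  have key := hσ₀ i hi b
  have hperm : permMat R σ₀ (⟨i, hi⟩, b) (⟨j, hj⟩, c)
      = (if ((σ₀ (⟨i, hi⟩, b)).1.1, (σ₀ (⟨i, hi⟩, b)).2) = (j, c) then (1 : R) else 0) := by
    simp only [permMat]
    congr 1
    simp only [eq_iff_iff]
    constructor
    · intro h; rw [h]
    · intro h
      obtain ⟨h1, h2⟩ := Prod.mk.injEq .. ▸ h
      exact Prod.ext (Subtype.ext h1) h2
  have hCB : (C * B) (⟨i, hi⟩, b) (⟨j, hj⟩, c)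
      = if (σ (i, b)).1 = i0 then
          (if σ (i0, (σ (i, b)).2) = (j, c) then (1 : R) else 0) else 0 := by
    rw [Matrix.mul_apply]
    simp only [Matrix.mul_apply, hC, hB, neg_mul_neg]
    by_cases hs : (σ (i, b)).1 = i0
    · have he : σ (i, b) = (i0, (σ (i, b)).2) := Prod.ext hs rfl
      rw [if_pos hs, Fin.sum_univ_two]
      have h01 : (σ (i, b)).2 = 0 ∨ (σ (i, b)).2 = 1 := by omega
      rcases h01 with h2 | h2
      · have e0 : σ (i, b) = (i0, 0) := by rw [he, h2]
        have e1 : σ (i, b) ≠ (i0, 1) := by rw [e0]; simp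
        simp [e0, e1]
      · have e0 : σ (i, b) = (i0, 1) := by rw [he, h2]
        have e1 : σ (i, b) ≠ (i0, 0) := by rw [e0]; simp
        simp [e0, e1]
    · rw [if_neg hs]
      apply Finset.sum_eq_zero
      intro a _
      have : σ (i, b) ≠ (i0, a) := fun h => hs (by rw [h])
      simp [this]
  rw [Matrix.sub_apply, Matrix.sub_apply]
  simp only [Matrix.sub_apply, hD, hperm, key, hCB, blockDiag]
  by_cases hs : (σ (i, b)).1 = i0
  · have h1 : σ (i, b) ≠ (j, c) :=
      fun h => hj ((congrArg Prod.fst h).symm.trans hs)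
    simp [hs, h1]
  · simp [hs]
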